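/- In the Yang-Mills algebra A, the defining relations are equivalent to the matrix identity M∇ = 0, where ∇ is the column vector of generators and M is the (s+1)×(s+1) matrix with entries M^{μν} = (g^{μν} g^{αβ} + g^{μα} g^{νβ} − 2 g^{μβ} g^{να}) ∇_α ∇_β; moreover the transposed identity ∇^t M = 0 also holds in A. -/
import Mathlib

private lemma sum3_eq {n : ℕ} {B : Type*} [AddCommMonoid B] (F : Fin n → Fin n → Fin n → B) :
    ∑ a, ∑ b, ∑ c, F a b c = ∑ p : Fin n × Fin n × Fin n, F p.1 p.2.1 p.2.2 := by
  simp [Fintype.sum_prod_type]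

private lemma hcoeff {B : Type*} [Ring B] [Algebra ℂ B] (p q r s t u : ℝ) (y : B) :
    ((p * q + r * s - 2 * (t * u) : ℝ) : ℂ) • y
      = ((p : ℂ) * (q : ℂ)) • y + ((r : ℂ) * (s : ℂ)) • y
        - ((t : ℂ) * (u : ℂ)) • y - ((t : ℂ) * (u : ℂ)) • y := by
  push_cast
  module

private lemma key {n : ℕ} (g : Matrix (Fin n) (Fin n) ℝ) (hsymm : ∀ i j, g i j = g j i)
    {B : Type*} [Ring B] [Algebra ℂ B] (f : Fin n → B) (μ : Fin n) :
    (∑ ν, ∑ a, ∑ b, ((g μ ν * g a b + g μ a * g ν b - 2 * g μ b * g ν a : ℝ) : ℂ) •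
        (f a * f b * f ν))
      = ∑ c, ((g μ c : ℂ)) • ∑ l, ∑ m, ((g l m : ℂ)) •
          (f l * (f m * f c - f c * f m) - (f m * f c - f c * f m) * f l) := by
  simp only [hcoeff, Finset.smul_sum, smul_smul, mul_sub, sub_mul, mul_assoc,
    smul_sub, smul_add, Finset.sum_add_distrib, Finset.sum_sub_distrib, sum3_eq]
  have E2 : (∑ p : Fin n × Fin n × Fin n,
        (↑(g μ p.2.1) * ↑(g p.1 p.2.2) : ℂ) • (f p.2.1 * (f p.2.2 * f p.1)))
      = ∑ p : Fin n × Fin n × Fin n,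
        (↑(g μ p.1) * ↑(g p.2.1 p.2.2) : ℂ) • (f p.1 * (f p.2.2 * f p.2.1)) :=
    Fintype.sum_equiv
      ⟨fun p => (p.2.1, p.1, p.2.2), fun p => (p.2.1, p.1, p.2.2),
        fun ⟨a, b, c⟩ => rfl, fun ⟨a, b, c⟩ => rfl⟩ _ _ (fun p => rfl)
  have E3 : (∑ p : Fin n × Fin n × Fin n,
        (↑(g μ p.2.2) * ↑(g p.1 p.2.1) : ℂ) • (f p.2.1 * (f p.2.2 * f p.1)))
      = ∑ p : Fin n × Fin n × Fin n,
        (↑(g μ p.1) * ↑(g p.2.1 p.2.2) : ℂ) • (f p.2.1 * (f p.1 * f p.2.2)) :=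
    Fintype.sum_equiv
      ⟨fun p => (p.2.2, p.2.1, p.1), fun p => (p.2.2, p.2.1, p.1),
        fun ⟨a, b, c⟩ => rfl, fun ⟨a, b, c⟩ => rfl⟩ _ _
      (fun p => by simp only [Equiv.coe_fn_mk]; rw [hsymm p.1 p.2.1])
  have E4 : (∑ p : Fin n × Fin n × Fin n,
        (↑(g μ p.2.2) * ↑(g p.1 p.2.1) : ℂ) • (f p.2.1 * (f p.2.2 * f p.1)))
      = ∑ p : Fin n × Fin n × Fin n,
        (↑(g μ p.1) * ↑(g p.2.1 p.2.2) : ℂ) • (f p.2.2 * (f p.1 * f p.2.1)) :=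
    Fintype.sum_equiv
      ⟨fun p => (p.2.2, p.1, p.2.1), fun p => (p.2.1, p.2.2, p.1),
        fun ⟨a, b, c⟩ => rfl, fun ⟨a, b, c⟩ => rfl⟩ _ _ (fun p => rfl)
  have hT := E3.symm.trans E4
  rw [E2, E3, hT]
  abel

private lemma key2 {n : ℕ} (g : Matrix (Fin n) (Fin n) ℝ) (hsymm : ∀ i j, g i j = g j i)
    {B : Type*} [Ring B] [Algebra ℂ B] (f : Fin n → B) (ν : Fin n) :
    (∑ m', ∑ a, ∑ b, ((g m' ν * g a b + g m' a * g ν b - 2 * g m' b * g ν a : ℝ) : ℂ) •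
        (f m' * (f a * f b)))
      = ∑ c, ((g ν c : ℂ)) • ∑ l, ∑ m, ((g l m : ℂ)) •
          (f l * (f m * f c - f c * f m) - (f m * f c - f c * f m) * f l) := by
  rw [← key g hsymm f ν]
  simp only [sum3_eq]
  refine Fintype.sum_equiv
    ⟨fun p => (p.2.2, p.1, p.2.1), fun p => (p.2.1, p.2.2, p.1),
      fun ⟨a, b, c⟩ => rfl, fun ⟨a, b, c⟩ => rfl⟩ _ _ ?_
  rintro ⟨m', a, b⟩
  simp only [Equiv.coe_fn_mk]
  have hc : (g m' ν * g a b + g m' a * g ν b - 2 * g m' b * g ν a : ℝ)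
      = (g ν b * g m' a + g ν m' * g b a - 2 * g ν a * g b m' : ℝ) := by
    rw [hsymm ν m', hsymm b a, hsymm b m']; ring
  rw [hc, ← mul_assoc]

private lemma inv_step {n : ℕ} (g : Matrix (Fin n) (Fin n) ℝ) (hdet : IsUnit g.det)
    {B : Type*} [AddCommGroup B] [Module ℂ B] (R : Fin n → B)
    (h : ∀ μ, ∑ c, ((g μ c : ℂ)) • R c = 0) : ∀ ν, R ν = 0 := by
  intro ν
  set G : Matrix (Fin n) (Fin n) ℂ := g.map (Complex.ofRealHom) with hG
  have hGdet : IsUnit G.det := by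
    rw [hG, ← RingHom.mapMatrix_apply, ← RingHom.map_det]
    exact hdet.map Complex.ofRealHom
  have hinv : G⁻¹ * G = 1 := Matrix.nonsing_inv_mul G hGdet
  have h1 : R ν = ∑ c, (1 : Matrix (Fin n) (Fin n) ℂ) ν c • R c := by
    simp [Matrix.one_apply, ite_smul]
  rw [h1, ← hinv]
  have h2 : ∀ c, ((G⁻¹ * G) ν c) • R c = ∑ μ, G⁻¹ ν μ • ((G μ c) • R c) := by
    intro c
    rw [Matrix.mul_apply, Finset.sum_smul]
    simp [mul_smul]
  simp only [h2]
  rw [Finset.sum_comm]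
  have h3 : ∀ μ, ∑ c, G⁻¹ ν μ • ((G μ c) • R c) = G⁻¹ ν μ • ∑ c, (G μ c) • R c := by
    intro μ; rw [Finset.smul_sum]
  simp only [h3]
  have h4 : ∀ μ, ∑ c, (G μ c) • R c = 0 := by
    intro μ
    have := h μ
    simpa [hG, Matrix.map_apply] using this
  simp [h4]



/-- the defining relations of the Yang-Mills algebra,
`g^{λμ}[∇_λ,[∇_μ,∇_ν]] = 0` for all `ν`, are equivalent to the matrix
identity `M∇ = 0` where
`M^{μν} = (g^{μν} g^{αβ} + g^{μα} g^{νβ} − 2 g^{μβ} g^{να}) ∇_α ∇_β`;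
moreover the relations also imply the transposed identity `∇ᵗM = 0`.
(Formulated universally over any unital associative ℂ-algebra; in particular
both identities hold in the Yang-Mills algebra `A` itself.) -/
theorem yang_mills_matrix_relations (s : ℕ) (hs : 1 ≤ s)
    (g : Matrix (Fin (s + 1)) (Fin (s + 1)) ℝ)
    (hsymm : g.IsSymm) (hdet : IsUnit g.det)
    (B : Type*) [Ring B] [Algebra ℂ B] (nabla : Fin (s + 1) → B)
    (M : Matrix (Fin (s + 1)) (Fin (s + 1)) B)
    (hM : ∀ μ ν, M μ ν = ∑ a, ∑ b,
      (((g μ ν * g a b + g μ a * g ν b - 2 * g μ b * g ν a : ℝ) : ℂ)) •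
        (nabla a * nabla b)) :
    ((∀ ν, ∑ l, ∑ m, ((g l m : ℂ)) •
        (nabla l * (nabla m * nabla ν - nabla ν * nabla m)
          - (nabla m * nabla ν - nabla ν * nabla m) * nabla l) = 0) ↔
      (∀ μ, ∑ ν, M μ ν * nabla ν = 0)) ∧
    ((∀ ν, ∑ l, ∑ m, ((g l m : ℂ)) •
        (nabla l * (nabla m * nabla ν - nabla ν * nabla m)
          - (nabla m * nabla ν - nabla ν * nabla m) * nabla l) = 0) →
      (∀ ν, ∑ μ, nabla μ * M μ ν = 0)) := by
  have hsymm' : ∀ i j, g i j = g j i := fun i j => (Matrix.IsSymm.apply hsymm j i)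
  -- the M∇ expression in terms of the relation vector
  have hA : ∀ μ, ∑ ν, M μ ν * nabla ν
      = ∑ c, ((g μ c : ℂ)) • ∑ l, ∑ m, ((g l m : ℂ)) •
          (nabla l * (nabla m * nabla c - nabla c * nabla m)
            - (nabla m * nabla c - nabla c * nabla m) * nabla l) := by
    intro μ
    rw [← key g hsymm' nabla μ]
    simp only [hM, Finset.sum_mul, smul_mul_assoc]
  have hB : ∀ ν, ∑ μ, nabla μ * M μ ν
      = ∑ c, ((g ν c : ℂ)) • ∑ l, ∑ m, ((g l m : ℂ)) •
          (nabla l * (nabla m * nabla c - nabla c * nabla m)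
            - (nabla m * nabla c - nabla c * nabla m) * nabla l) := by
    intro ν
    rw [← key2 g hsymm' nabla ν]
    simp only [hM, Finset.mul_sum, mul_smul_comm]
  constructor
  · constructor
    · intro h μ
      rw [hA μ]
      simp only [h, smul_zero, Finset.sum_const_zero]
    · intro h ν
      exact inv_step g hdet _ (fun μ => (hA μ) ▸ h μ) ν
  · intro h ν
    rw [hB ν]
    simp only [h, smul_zero, Finset.sum_const_zero]
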